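/- arXiv:2003.12813 — 2 statements merged into one kernel-verified Lean document; each statement's English description precedes it below -/
import Mathlib

section
/- Fix a real α > 0 and an integer k ≥ 2, and define f(s) = α^s · C(k-s-1, s-1) for integers 1 ≤ s ≤ k/2. Then f attains its maximum at s* = ⌈r₁⌉, where r₁ = k/2 - (2α+1+√Δ)/(8α+2) with Δ = (4α+1)k(k-2) + (2α+1)². -/
lemma aux_choose_real (a b : ℕ) :
    (((a+b+1).choose (a+1) : ℝ)) * ((a+1) * (a+b+2)) =
    (((a+b+2).choose a : ℝ)) * ((b+2)*(b+1)) := by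
  rw [Nat.cast_choose ℝ (by omega : a+1 ≤ a+b+1), Nat.cast_choose ℝ (by omega : a ≤ a+b+2)]
  have e1 : a+b+1 - (a+1) = b := by omega
  have e2 : a+b+2 - a = b+2 := by omega
  rw [e1, e2]
  have f1 : ((a+1).factorial : ℝ) = (a+1) * a.factorial := by exact_mod_cast Nat.factorial_succ a
  have f2 : ((b+2).factorial : ℝ) = (b+2) * ((b+1) * b.factorial) := by
    push_cast [Nat.factorial_succ]; ring
  have f3 : ((a+b+2).factorial : ℝ) = (a+b+2) * (a+b+1).factorial := by
    exact_mod_cast Nat.factorial_succ (a+b+1)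
  have p1 : (0:ℝ) < a.factorial := by exact_mod_cast a.factorial_pos
  have p2 : (0:ℝ) < b.factorial := by exact_mod_cast b.factorial_pos
  rw [f1, f2, f3]
  field_simp

set_option maxHeartbeats 1600000 in
/-- For real `α > 0` and integer `k ≥ 2`, the function
`f(s) = α^s · C(k-s-1, s-1)` on integers `1 ≤ s ≤ k/2` attains its maximum at
`s* = ⌈r₁⌉`, where `r₁ = k/2 - (2α+1+√Δ)/(8α+2)` and
`Δ = (4α+1)k(k-2) + (2α+1)²`. -/
theorem max_at_ceil_root (α : ℝ) (hα : 0 < α) (k : ℕ) (hk : 2 ≤ k)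
    (Δ r₁ : ℝ)
    (hΔ : Δ = (4 * α + 1) * (k : ℝ) * ((k : ℝ) - 2) + (2 * α + 1) ^ 2)
    (hr₁ : r₁ = (k : ℝ) / 2 - (2 * α + 1 + Real.sqrt Δ) / (8 * α + 2))
    (f : ℕ → ℝ)
    (hf : ∀ s : ℕ, f s = α ^ s * ((k - s - 1).choose (s - 1) : ℝ)) :
    1 ≤ (⌈r₁⌉ : ℤ).toNat ∧ 2 * (⌈r₁⌉ : ℤ).toNat ≤ k ∧
      ∀ s : ℕ, 1 ≤ s → 2 * s ≤ k → f s ≤ f (⌈r₁⌉ : ℤ).toNat := by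
  set K : ℝ := (k : ℝ) with hK
  have hK2 : (2:ℝ) ≤ K := by rw [hK]; exact_mod_cast hk
  have hΔnn : 0 ≤ Δ := by
    rw [hΔ]
    nlinarith [mul_nonneg (by linarith : (0:ℝ) ≤ K) (by linarith : (0:ℝ) ≤ K - 2), sq_nonneg (2*α+1)]
  set h : ℝ := Real.sqrt Δ with hh
  have hh0 : 0 ≤ h := Real.sqrt_nonneg Δ
  have hh2 : h ^ 2 = Δ := Real.sq_sqrt hΔnn
  have hBpos : 0 < (4*α+1)*K - (2*α+1) := by nlinarith
  have hdisc : h ^ 2 = ((4*α+1)*K - (2*α+1)) ^ 2 - 4 * (4*α+1) * (α * K * (K-1)) := by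
    rw [hh2, hΔ]; ring
  have hr1' : r₁ = (((4*α+1)*K - (2*α+1)) - h) / (8*α+2) := by
    rw [hr₁]; field_simp; ring
  have h82 : (0:ℝ) < 8*α+2 := by linarith
  have hC : 0 < α * K * (K-1) := mul_pos (mul_pos hα (by linarith)) (by linarith)
  -- r₁ > 0
  have hhB : h < (4*α+1)*K - (2*α+1) := by
    nlinarith [mul_pos (by positivity : (0:ℝ) < 4*(4*α+1)) hC, hh0, hBpos, hdisc]
  have hr1pos : 0 < r₁ := by rw [hr1']; exact div_pos (by linarith) h82
  -- h ≥ 2α, hence r₁ ≤ (K-1)/2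
  have h2a : 2*α ≤ h := by nlinarith [sq_nonneg (K-1)]
  have hr1half : r₁ ≤ (K-1)/2 := by
    rw [hr1', div_le_div_iff₀ h82 (by norm_num : (0:ℝ) < 2)]
    nlinarith
  -- ceiling facts
  have hceil1 : 1 ≤ ⌈r₁⌉ := by exact_mod_cast Int.ceil_pos.mpr hr1pos
  set t : ℕ := (⌈r₁⌉ : ℤ).toNat with ht
  have htZ : (t : ℤ) = ⌈r₁⌉ := Int.toNat_of_nonneg (by omega)
  have htR : (t : ℝ) = (⌈r₁⌉ : ℝ) := by exact_mod_cast htZ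
  have ht1 : 1 ≤ t := by omega
  have htk : 2 * t ≤ k := by
    have h1 : (2 * (⌈r₁⌉:ℝ)) < K + 1 := by
      have := Int.ceil_lt_add_one r₁
      linarith
    have h2 : (2 * ⌈r₁⌉ : ℤ) < (k : ℤ) + 1 := by
      have : ((2 * ⌈r₁⌉ : ℤ) : ℝ) < ((k:ℤ):ℝ) + 1 := by push_cast; rw [hK] at h1; push_cast at h1; linarith
      exact_mod_cast this
    omega
  have htr : r₁ ≤ (t : ℝ) := htR ▸ Int.le_ceil r₁
  have htr' : (t : ℝ) - 1 < r₁ := by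
    have := Int.ceil_lt_add_one r₁
    rw [htR]; linarith
  -- the key difference identity
  have hdiff : ∀ s : ℕ, 1 ≤ s → 2*s+2 ≤ k →
      (f (s+1) - f s) * ((s:ℝ) * (K - s - 1)) =
      α ^ s * (((k - s - 1).choose (s - 1) : ℝ)) *
        (α * (K - 2*s) * (K - 2*s - 1) - (s:ℝ) * (K - s - 1)) := by
    intro s hs1 hs2
    obtain ⟨a, rfl⟩ : ∃ a, s = a + 1 := ⟨s - 1, by omega⟩
    obtain ⟨b, rfl⟩ : ∃ b, k = 2*(a+1)+b+2 := ⟨k - 2*(a+1) - 2, by omega⟩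
    have e1 : 2*(a+1)+b+2 - (a+1) - 1 = a+b+2 := by omega
    have e2 : 2*(a+1)+b+2 - (a+1+1) - 1 = a+b+1 := by omega
    have e3 : a+1-1 = a := by omega
    have e4 : a+1+1-1 = a+1 := by omega
    rw [hf (a+1), hf (a+1+1), e1, e2, e3, e4]
    have hid := aux_choose_real a b
    have hKe : K = ((2*(a+1)+b+2 : ℕ) : ℝ) := by rw [hK]
    rw [hKe]
    push_cast
    linear_combination α ^ (a+2) * hid
  -- positivity of binomial coefficients in range
  have hchoosepos : ∀ s : ℕ, 1 ≤ s → 2*s ≤ k → (0:ℝ) < ((k - s - 1).choose (s-1) : ℝ) := by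
    intro s hs1 hs2
    have : s - 1 ≤ k - s - 1 := by omega
    exact_mod_cast Nat.choose_pos this
  -- sign of the quadratic
  have gpos : ∀ x : ℝ, 0 ≤ x → x ≤ r₁ → 0 ≤ α * (K - 2*x) * (K - 2*x - 1) - x * (K - x - 1) := by
    intro x hx0 hx
    have h1 : h ≤ ((4*α+1)*K - (2*α+1)) - 2*(4*α+1)*x := by
      rw [hr1'] at hx
      rw [le_div_iff₀ h82] at hx
      linarith
    have h2 : h^2 ≤ (((4*α+1)*K - (2*α+1)) - 2*(4*α+1)*x)^2 := by
      rw [sq, sq]; exact mul_le_mul h1 h1 hh0 (le_trans hh0 h1)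
    have key : 4*(4*α+1)*(α * (K - 2*x) * (K - 2*x - 1) - x * (K - x - 1)) =
        (((4*α+1)*K - (2*α+1)) - 2*(4*α+1)*x)^2 - h^2 := by
      linear_combination hdisc
    have h6 : 0 ≤ 4*(4*α+1)*(α * (K - 2*x) * (K - 2*x - 1) - x * (K - x - 1)) := by linarith
    have h7 : (0:ℝ) < 4*(4*α+1) := by linarith
    exact le_of_mul_le_mul_left (by linarith) h7
  have gneg : ∀ x : ℝ, r₁ ≤ x → x ≤ K/2 - 1 → α * (K - 2*x) * (K - 2*x - 1) - x * (K - x - 1) ≤ 0 := by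
    intro x hx hx2
    have h1 : ((4*α+1)*K - (2*α+1)) - 2*(4*α+1)*x ≤ h := by
      rw [hr1'] at hx
      rw [div_le_iff₀ h82] at hx
      linarith
    have h2 : -h ≤ ((4*α+1)*K - (2*α+1)) - 2*(4*α+1)*x := by
      linarith [mul_le_mul_of_nonneg_left hx2 (by linarith : (0:ℝ) ≤ 2*(4*α+1)), hh0]
    have h3 : (((4*α+1)*K - (2*α+1)) - 2*(4*α+1)*x)^2 ≤ h^2 := by
      linarith [mul_nonneg (by linarith : 0 ≤ h - (((4*α+1)*K - (2*α+1)) - 2*(4*α+1)*x)) (by linarith : 0 ≤ h + (((4*α+1)*K - (2*α+1)) - 2*(4*α+1)*x))]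
    have key : 4*(4*α+1)*(α * (K - 2*x) * (K - 2*x - 1) - x * (K - x - 1)) =
        (((4*α+1)*K - (2*α+1)) - 2*(4*α+1)*x)^2 - h^2 := by
      linear_combination hdisc
    have h6 : 4*(4*α+1)*(α * (K - 2*x) * (K - 2*x - 1) - x * (K - x - 1)) ≤ 0 := by linarith
    have h7 : (0:ℝ) < 4*(4*α+1) := by linarith
    exact le_of_mul_le_mul_left (by linarith) h7
  -- single increase / decrease steps
  have step_up : ∀ s : ℕ, 1 ≤ s → s + 1 ≤ t → f s ≤ f (s+1) := by
    intro s hs1 hst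
    have hsk : 2*s+2 ≤ k := by omega
    have hxr : (s:ℝ) ≤ r₁ := by
      have : (s:ℝ) ≤ (t:ℝ) - 1 := by
        have : (s:ℝ) + 1 ≤ (t:ℝ) := by exact_mod_cast hst
        linarith
      linarith [htr']
    have hg := gpos (s:ℝ) (by positivity) hxr
    have hd := hdiff s hs1 hsk
    have hP : (0:ℝ) < (s:ℝ) * (K - s - 1) := by
      have : (2*s+2 : ℝ) ≤ K := by rw [hK]; exact_mod_cast hsk
      have hs1' : (1:ℝ) ≤ (s:ℝ) := by exact_mod_cast hs1
      exact mul_pos (by linarith) (by linarith)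
    have hCpos := hchoosepos s hs1 (by omega)
    have h5 : 0 ≤ (f (s+1) - f s) * ((s:ℝ) * (K - s - 1)) := by
      rw [hd]
      exact mul_nonneg (mul_nonneg (le_of_lt (pow_pos hα s)) (le_of_lt hCpos)) hg
    have h8 : (0:ℝ) ≤ f (s+1) - f s := le_of_mul_le_mul_right (by linarith) hP
    linarith
  have step_down : ∀ s : ℕ, t ≤ s → 2*s+2 ≤ k → f (s+1) ≤ f s := by
    intro s hst hsk
    have hs1 : 1 ≤ s := le_trans ht1 hst
    have hxr : r₁ ≤ (s:ℝ) := le_trans htr (by exact_mod_cast hst)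
    have hx2 : (s:ℝ) ≤ K/2 - 1 := by
      have : (2*s+2 : ℝ) ≤ K := by rw [hK]; exact_mod_cast hsk
      linarith
    have hg := gneg (s:ℝ) hxr hx2
    have hd := hdiff s hs1 hsk
    have hP : (0:ℝ) < (s:ℝ) * (K - s - 1) := by
      have : (2*s+2 : ℝ) ≤ K := by rw [hK]; exact_mod_cast hsk
      have hs1' : (1:ℝ) ≤ (s:ℝ) := by exact_mod_cast hs1
      exact mul_pos (by linarith) (by linarith)
    have hCpos := hchoosepos s hs1 (by omega)
    have h5 : (f (s+1) - f s) * ((s:ℝ) * (K - s - 1)) ≤ 0 := by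
      rw [hd]
      exact mul_nonpos_of_nonneg_of_nonpos (mul_nonneg (le_of_lt (pow_pos hα s)) (le_of_lt hCpos)) hg
    have h8 : f (s+1) - f s ≤ 0 := le_of_mul_le_mul_right (by linarith) hP
    linarith
  -- chains
  have chain_up : ∀ n : ℕ, ∀ s : ℕ, 1 ≤ s → s + n ≤ t → f s ≤ f (s + n) := by
    intro n
    induction n with
    | zero => intro s _ _; simp
    | succ n ih =>
      intro s hs1 hsn
      calc f s ≤ f (s+1) := step_up s hs1 (by omega)
        _ ≤ f (s+1+n) := ih (s+1) (by omega) (by omega)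
        _ = f (s + (n+1)) := by ring_nf
  have chain_down : ∀ n : ℕ, ∀ s : ℕ, t ≤ s → 2*(s+n) ≤ k → f (s + n) ≤ f s := by
    intro n
    induction n with
    | zero => intro s _ _; simp
    | succ n ih =>
      intro s hst hsn
      calc f (s + (n+1)) = f ((s+n) + 1) := by ring_nf
        _ ≤ f (s + n) := step_down (s+n) (by omega) (by omega)
        _ ≤ f s := ih s hst (by omega)
  refine ⟨ht1, htk, ?_⟩
  intro s hs1 hs2
  rcases le_or_gt s t with hle | hlt
  · have := chain_up (t - s) s hs1 (by omega)
    rwa [show s + (t - s) = t by omega] at this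
  · have := chain_down (s - t) t (le_refl t) (by omega)
    rwa [show t + (s - t) = s by omega] at this
end

section
/- In constrained-degree percolation on the d-ary tree with d ≥ 3, the probability that a given edge e of the random binary subtree T is 'red' is strictly greater than 1/2, where P(e red) = (1/2)·d·[1/(2d) + d(2d-2)!/(2d)! + d(d-1)(2d-3)!/(2d)!] + (1/2)·d·[(d-1)(2d-2)!/(2d)! + 2d(d-1)(2d-3)!/(2d)! + 3d(d-1)²(2d-4)!/(2d)!]. Prove that for every integer d ≥ 2, d·[1/(2d) + d(2d-2)!/(2d)! + d(d-1)(2d-3)!/(2d)!]/2 + d·[(d-1)(2d-2)!/(2d)! + 2d(d-1)(2d-3)!/(2d)! + 3d(d-1)²(2d-4)!/(2d)!]/2 > 1/2. -/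
/-- The red-edge probability on the `d`-ary tree is strictly larger than `1/2`:
for every integer `d ≥ 2`,
`d·[1/(2d) + d(2d-2)!/(2d)! + d(2d-3)!/(2d)!]/2
 + d·[(d-1)(2d-2)!/(2d)! + 2d(d-1)(2d-3)!/(2d)! + 3d(d-1)²(2d-4)!/(2d)!]/2 > 1/2`. -/
theorem red_edge_prob_gt_half (d : ℕ) (hd : 2 ≤ d) :
    (d : ℝ) * (1 / (2 * (d : ℝ))
        + (d : ℝ) * (Nat.factorial (2 * d - 2) : ℝ) / (Nat.factorial (2 * d) : ℝ)
        + (d : ℝ) * ((d : ℝ) - 1) * (Nat.factorial (2 * d - 3) : ℝ)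
            / (Nat.factorial (2 * d) : ℝ)) / 2
      + (d : ℝ) * (((d : ℝ) - 1) * (Nat.factorial (2 * d - 2) : ℝ)
            / (Nat.factorial (2 * d) : ℝ)
        + 2 * (d : ℝ) * ((d : ℝ) - 1) * (Nat.factorial (2 * d - 3) : ℝ)
            / (Nat.factorial (2 * d) : ℝ)
        + 3 * (d : ℝ) * ((d : ℝ) - 1) ^ 2 * (Nat.factorial (2 * d - 4) : ℝ)
            / (Nat.factorial (2 * d) : ℝ)) / 2 > 1 / 2 := by
  obtain ⟨k, rfl⟩ := Nat.exists_eq_add_of_le hd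
  have h2 : 2 * (2 + k) - 2 = 2 * k + 2 := by omega
  have h3 : 2 * (2 + k) - 3 = 2 * k + 1 := by omega
  have h4 : 2 * (2 + k) - 4 = 2 * k := by omega
  have h0 : 2 * (2 + k) = 2 * k + 4 := by omega
  rw [h2, h3, h4, h0]
  have Fpos : (0:ℝ) < (Nat.factorial (2 * k) : ℝ) := by
    exact_mod_cast Nat.factorial_pos _
  set x : ℝ := (k : ℝ) with hx
  have hxnn : (0:ℝ) ≤ x := Nat.cast_nonneg k
  have h1pos : (0:ℝ) < 2 * x + 1 := by linarith
  have h2pos : (0:ℝ) < 2 * x + 2 := by linarith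
  have h3pos : (0:ℝ) < 2 * x + 3 := by linarith
  have h4pos : (0:ℝ) < 2 * x + 4 := by linarith
  set F : ℝ := (Nat.factorial (2 * k) : ℝ) with hF
  have e1 : (Nat.factorial (2 * k + 1) : ℝ) = (2 * x + 1) * F := by
    rw [Nat.factorial_succ]; push_cast [hF, hx]; ring
  have e2 : (Nat.factorial (2 * k + 2) : ℝ) = (2 * x + 2) * ((2 * x + 1) * F) := by
    rw [show 2 * k + 2 = 2 * k + 1 + 1 from rfl, Nat.factorial_succ, Nat.cast_mul, e1]
    push_cast [hx]; ring
  have e4 : (Nat.factorial (2 * k + 4) : ℝ)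
      = (2 * x + 4) * ((2 * x + 3) * ((2 * x + 2) * ((2 * x + 1) * F))) := by
    rw [show 2 * k + 4 = 2 * k + 2 + 1 + 1 from rfl, Nat.factorial_succ, Nat.cast_mul,
      Nat.factorial_succ, Nat.cast_mul, e2]
    push_cast [hx]; ring
  have r2 : F ≠ 0 := ne_of_gt Fpos
  have rr2 : (Nat.factorial (2 * k + 2) : ℝ) / (Nat.factorial (2 * k + 4) : ℝ)
      = 1 / ((2 * x + 4) * (2 * x + 3)) := by
    rw [e2, e4]; field_simp
  have rr3 : (Nat.factorial (2 * k + 1) : ℝ) / (Nat.factorial (2 * k + 4) : ℝ)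
      = 1 / ((2 * x + 4) * (2 * x + 3) * (2 * x + 2)) := by
    rw [e1, e4]; field_simp
  have rr4 : F / (Nat.factorial (2 * k + 4) : ℝ)
      = 1 / ((2 * x + 4) * (2 * x + 3) * (2 * x + 2) * (2 * x + 1)) := by
    rw [e4]; field_simp
  have hc : ((2 + k : ℕ) : ℝ) = 2 + x := by push_cast [hx]; ring
  rw [hc]
  simp only [mul_div_assoc, rr2, rr3, rr4]
  rw [gt_iff_lt, ← sub_pos]
  have key : (2 + x) *
          ((1 / (2 * (2 + x)) + (2 + x) * (1 / ((2 * x + 4) * (2 * x + 3))) +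
              (2 + x) * (2 + x - 1) * (1 / ((2 * x + 4) * (2 * x + 3) * (2 * x + 2)))) /
            2) +
        (2 + x) *
          (((2 + x - 1) * (1 / ((2 * x + 4) * (2 * x + 3))) +
                2 * (2 + x) * (2 + x - 1) * (1 / ((2 * x + 4) * (2 * x + 3) * (2 * x + 2))) +
              3 * (2 + x) * (2 + x - 1) ^ 2 * (1 / ((2 * x + 4) * (2 * x + 3) * (2 * x + 2) * (2 * x + 1)))) /
            2) -
      1 / 2
      = (18 * x ^ 4 + 102 * x ^ 3 + 204 * x ^ 2 + 168 * x + 48)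
          / (4 * ((2 * x + 4) * (2 * x + 3) * (2 * x + 2) * (2 * x + 1))) := by
    have hd2 : (0:ℝ) < 2 + x := by linarith
    field_simp
    ring
  rw [key]
  positivity
end
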